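/- Let G and H be finite abelian groups with coprime orders. Then the number of zero-sum multisets of length |H| over G equals (1/(|G|+|H|)) · C(|G|+|H|; |G|), the rational Catalan number. -/

import Mathlib

/-- The number of zero-sum multisets of size `m` over `G`. -/
noncomputable def numZeroSum (G : Type*) [AddCommGroup G] (m : ℕ) : ℕ :=
  Nat.card {S : Multiset G // Multiset.card S = m ∧ S.sum = 0}

/-- The number of elements of order `d` in `G`. -/
noncomputable def phiOrd (G : Type*) [AddGroup G] (d : ℕ) : ℕ :=
  Nat.card {g : G // addOrderOf g = d}

theorem stmt_5 (G H : Type*) [AddCommGroup G] [Fintype G] [AddCommGroup H] [Fintype H]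
    (h : Nat.Coprime (Fintype.card G) (Fintype.card H)) :
    (numZeroSum G (Fintype.card H) : ℚ) = (1 / (Fintype.card G + Fintype.card H : ℚ)) *
      (Nat.choose (Fintype.card G + Fintype.card H) (Fintype.card G) : ℚ) := by
  classical
  set n := Fintype.card G with hn
  set m := Fintype.card H with hm
  have hn1 : 1 ≤ n := Fintype.card_pos
  have hm1 : 1 ≤ m := Fintype.card_pos
  -- m • g = 0 implies g = 0
  have hzero : ∀ g : G, m • g = 0 → g = 0 := by
    intro g hg
    have h1 : addOrderOf g ∣ m := addOrderOf_dvd_of_nsmul_eq_zero hg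
    have h2 : addOrderOf g ∣ n := addOrderOf_dvd_card
    have h3 : addOrderOf g = 1 :=
      Nat.eq_one_of_dvd_one (h ▸ Nat.dvd_gcd h2 h1)
    exact AddMonoid.addOrderOf_eq_one_iff.mp h3
  have hinj : Function.Injective (fun g : G => m • g) := by
    intro a b hab
    have hab' : m • (a - b) = 0 := by
      rw [smul_sub, sub_eq_zero]; exact hab
    exact sub_eq_zero.mp (hzero _ hab')
  have hsurj : Function.Surjective (fun g : G => m • g) :=
    Finite.surjective_of_injective hinj
  -- sum of a translated multiset
  have hsum : ∀ (S : Multiset G) (g : G),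
      (S.map (· + g)).sum = S.sum + Multiset.card S • g := by
    intro S g
    have : (S.map fun x => x + g).sum = (S.map id).sum + (S.map fun _ => g).sum :=
      Multiset.sum_map_add
    simpa using this
  -- the bijection (g, S) ↦ S + g between G × zero-sum multisets and all size-m multisets
  set Z := {S : Multiset G // Multiset.card S = m ∧ S.sum = 0} with hZ
  let f : G × Z → Sym G m := fun p =>
    ⟨p.2.val.map (· + p.1), by rw [Multiset.card_map]; exact p.2.2.1⟩
  have hfbij : Function.Bijective f := by
    constructor
    · rintro ⟨g, S, hScard, hSsum⟩ ⟨g', S', hScard', hSsum'⟩ hf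
      have hval : S.map (· + g) = S'.map (· + g') := congrArg Subtype.val hf
      have hsums : m • g = m • g' := by
        have := congrArg Multiset.sum hval
        rw [hsum, hsum, hSsum, hSsum', hScard, hScard'] at this
        simpa using this
      have hgg : g = g' := hinj hsums
      subst hgg
      have : S = S' := Multiset.map_injective (add_left_injective g) hval
      simp [this]
    · rintro ⟨T, hT⟩
      obtain ⟨g, hg⟩ := hsurj T.sum
      refine ⟨⟨g, ⟨T.map (· - g), ?_, ?_⟩⟩, ?_⟩
      · rw [Multiset.card_map]; exact hT
      · have : (T.map fun x => x - g).sum = (T.map id).sum + (T.map fun _ => -g).sum := by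
          simpa [sub_eq_add_neg] using
            (Multiset.sum_map_add (s := T) (f := id) (g := fun _ => -g))
        simp only [Multiset.map_id, Multiset.map_const', Multiset.sum_replicate, hT] at this
        rw [this, ← hg]
        simp [smul_neg]
      · apply Subtype.ext
        show (T.map (· - g)).map (· + g) = T
        rw [Multiset.map_map]
        simp
  -- count both sides
  have hcount : n * numZeroSum G m = (n + m - 1).choose m := by
    have := Nat.card_congr (Equiv.ofBijective f hfbij)
    rw [Nat.card_prod, Nat.card_eq_fintype_card (α := G),
      Nat.card_eq_fintype_card (α := Sym G m), Sym.card_sym_eq_choose] at this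
    exact this
  -- the binomial identity
  have hchoose : (n + m) * (n + m - 1).choose m = n * (n + m).choose n := by
    have e1 : (n + m - 1).choose m = (n + m - 1).choose (n - 1) := by
      have := Nat.choose_symm (n := n + m - 1) (k := n - 1) (by omega)
      rw [show n + m - 1 - (n - 1) = m by omega] at this
      omega
    have e2 := Nat.add_one_mul_choose_eq (n + m - 1) (n - 1)
    rw [show n + m - 1 + 1 = n + m by omega, show n - 1 + 1 = n by omega] at e2
    rw [e1, e2]
    ring
  -- put it together over ℚ
  have h1 : (n : ℚ) * numZeroSum G m = ((n + m - 1).choose m : ℚ) := by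
    exact_mod_cast congrArg (Nat.cast : ℕ → ℚ) hcount
  have h2 : ((n : ℚ) + m) * ((n + m - 1).choose m : ℚ) = (n : ℚ) * ((n + m).choose n : ℚ) := by
    exact_mod_cast congrArg (Nat.cast : ℕ → ℚ) hchoose
  have hnq : (n : ℚ) ≠ 0 := by positivity
  have hnmq : (n : ℚ) + m ≠ 0 := by positivity
  have h3 : (n : ℚ) * ((numZeroSum G m : ℚ) * ((n : ℚ) + m)) = (n : ℚ) * ((n + m).choose n : ℚ) := by
    linear_combination ((n : ℚ) + m) * h1 + h2
  have h4 := mul_left_cancel₀ hnq h3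
  field_simp
  linear_combination h4
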